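/- Adaptive composition of dominating pairs: let μ₁, ν₁ be probability measures on a measurable space Ω₁, let κ and η be Markov kernels from Ω₁ to a measurable space Ω₂, and let P, Q be probability measures on a measurable space Ω₁' and P', Q' probability measures on a measurable space Ω₂'. Assume that for every α ≥ 0, H_α(μ₁‖ν₁) ≤ H_α(P‖Q), and that for every α ≥ 0 and every ω₁ ∈ Ω₁, H_α(κ(ω₁)‖η(ω₁)) ≤ H_α(P'‖Q'). Then for every α ≥ 0, H_α(μ₁ ⊗ κ ‖ ν₁ ⊗ η) ≤ H_α(P × P' ‖ Q × Q'), where μ₁ ⊗ κ denotes the measure on Ω₁ × Ω₂ obtained by composing μ₁ with the kernel κ (the composition-product), and P × P' denotes the product measure. -/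

import Mathlib

open MeasureTheory ProbabilityTheory

/-- The hockey-stick divergence `H_α(P‖Q) = ∫ (p − α·q)₊ dμ` with `μ = P + Q`. -/
noncomputable def hockeyStick {Ω : Type*} [MeasurableSpace Ω] (α : ℝ) (P Q : Measure Ω) : ℝ :=
  ∫ ω, max ((P.rnDeriv (P + Q) ω).toReal - α * (Q.rnDeriv (P + Q) ω).toReal) 0 ∂(P + Q)

section Auxiliary

open ENNReal

variable {Ω Ω' : Type*} [MeasurableSpace Ω] [MeasurableSpace Ω']

/-- Scaled hockey-stick divergence in `ℝ≥0∞`: `∫ (a·p − b·q)₊`. -/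
noncomputable def HE (P Q : Measure Ω) (a b : ℝ≥0∞) : ℝ≥0∞ :=
  ∫⁻ ω, (a * P.rnDeriv (P + Q) ω - b * Q.rnDeriv (P + Q) ω) ∂(P + Q)

lemma absCont_left (P Q : Measure Ω) : P ≪ P + Q :=
  Measure.absolutelyContinuous_of_le (Measure.le_add_right le_rfl)

lemma absCont_right (P Q : Measure Ω) : Q ≪ P + Q :=
  Measure.absolutelyContinuous_of_le (Measure.le_add_left le_rfl)

lemma HE_ne_top' (P Q : Measure Ω) [IsFiniteMeasure P] {a b : ℝ≥0∞} (ha : a ≠ ⊤) :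
    HE P Q a b ≠ ⊤ := by
  have h1 : HE P Q a b ≤ a * ∫⁻ ω, P.rnDeriv (P + Q) ω ∂(P + Q) := by
    rw [← lintegral_const_mul a (Measure.measurable_rnDeriv _ _)]
    exact lintegral_mono fun ω => tsub_le_self
  exact (h1.trans_lt (ENNReal.mul_lt_top ha.lt_top
    (Measure.lintegral_rnDeriv_lt_top P (P + Q)))).ne

lemma hockeyStick_eq_toReal {α : ℝ} (hα : 0 ≤ α) (P Q : Measure Ω)
    [IsFiniteMeasure P] [IsFiniteMeasure Q] :
    hockeyStick α P Q = (HE P Q 1 (ENNReal.ofReal α)).toReal := by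
  set c := ENNReal.ofReal α with hc
  have hcne : c ≠ ⊤ := ofReal_ne_top
  rw [hockeyStick, HE, ← integral_toReal]
  · apply integral_congr_ae
    filter_upwards [Measure.rnDeriv_ne_top P (P + Q), Measure.rnDeriv_ne_top Q (P + Q)]
      with ω hp hq
    set x := P.rnDeriv (P + Q) ω
    set y := Q.rnDeriv (P + Q) ω
    have hcy : c * y ≠ ⊤ := ENNReal.mul_ne_top hcne hq
    have htr : (c * y).toReal = α * y.toReal := by
      rw [ENNReal.toReal_mul, hc, ENNReal.toReal_ofReal hα]
    rw [one_mul]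
    rcases le_or_gt (c * y) x with h | h
    · rw [max_eq_left, ENNReal.toReal_sub_of_le h hp, htr]
      rw [sub_nonneg, ← htr]
      exact ENNReal.toReal_mono hp h
    · rw [tsub_eq_zero_of_le h.le, ENNReal.toReal_zero, max_eq_right]
      rw [sub_nonpos, ← htr]
      exact ENNReal.toReal_mono hcy h.le
  · exact ((measurable_const.mul (Measure.measurable_rnDeriv _ _)).sub
      (measurable_const.mul (Measure.measurable_rnDeriv _ _))).aemeasurable
  · filter_upwards [Measure.rnDeriv_ne_top P (P + Q)] with ω hp
    exact lt_of_le_of_lt (tsub_le_self.trans (by rw [one_mul])) hp.lt_top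

lemma HE_smul (P Q : Measure Ω) {a : ℝ≥0∞} (b : ℝ≥0∞) (ha0 : a ≠ 0) (ha : a ≠ ⊤) :
    HE P Q a b = a * HE P Q 1 (b / a) := by
  rw [HE, HE, ← lintegral_const_mul a (((measurable_const.fun_mul
    (Measure.measurable_rnDeriv _ _))).fun_sub
    (measurable_const.fun_mul (Measure.measurable_rnDeriv _ _)))]
  apply lintegral_congr fun ω => ?_
  rw [ENNReal.mul_sub (fun _ _ => ha), one_mul]
  congr 1
  rw [← mul_assoc, ENNReal.mul_div_cancel' (fun h => absurd h ha0) (fun h => absurd h ha)]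

lemma HE_mono {μ ν : Measure Ω} {P Q : Measure Ω'}
    [IsFiniteMeasure μ] [IsFiniteMeasure ν] [IsFiniteMeasure P] [IsFiniteMeasure Q]
    (h : ∀ β : ℝ, 0 ≤ β → hockeyStick β μ ν ≤ hockeyStick β P Q)
    {a b : ℝ≥0∞} (ha : a ≠ ⊤) (hb : b ≠ ⊤) :
    HE μ ν a b ≤ HE P Q a b := by
  rcases eq_or_ne a 0 with rfl | ha0
  · have : HE μ ν 0 b = 0 := by
      simp [HE, zero_tsub]
    rw [this]
    exact zero_le
  · rw [HE_smul μ ν b ha0 ha, HE_smul P Q b ha0 ha]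
    apply mul_le_mul_right
    have hba : b / a ≠ ⊤ := (ENNReal.div_lt_top hb ha0).ne
    have hofr : ENNReal.ofReal (b / a).toReal = b / a := ENNReal.ofReal_toReal hba
    rw [← hofr]
    rw [← ENNReal.toReal_le_toReal (HE_ne_top' _ _ one_ne_top) (HE_ne_top' _ _ one_ne_top),
      ← hockeyStick_eq_toReal ENNReal.toReal_nonneg, ← hockeyStick_eq_toReal ENNReal.toReal_nonneg]
    exact h _ ENNReal.toReal_nonneg

lemma HE_set_le (P Q : Measure Ω) [IsFiniteMeasure P] [IsFiniteMeasure Q]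
    (a b : ℝ≥0∞) {s : Set Ω} (hs : MeasurableSet s) :
    a * P s - b * Q s ≤ HE P Q a b := by
  have hP : ∫⁻ ω in s, P.rnDeriv (P + Q) ω ∂(P + Q) = P s :=
    Measure.setLIntegral_rnDeriv' (absCont_left P Q) hs
  have hQ : ∫⁻ ω in s, Q.rnDeriv (P + Q) ω ∂(P + Q) = Q s :=
    Measure.setLIntegral_rnDeriv' (absCont_right P Q) hs
  calc a * P s - b * Q s
      = (∫⁻ ω in s, a * P.rnDeriv (P + Q) ω ∂(P + Q))
        - ∫⁻ ω in s, b * Q.rnDeriv (P + Q) ω ∂(P + Q) := by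
        rw [lintegral_const_mul a (Measure.measurable_rnDeriv _ _),
          lintegral_const_mul b (Measure.measurable_rnDeriv _ _), hP, hQ]
    _ ≤ ∫⁻ ω in s, (a * P.rnDeriv (P + Q) ω - b * Q.rnDeriv (P + Q) ω) ∂(P + Q) :=
        lintegral_sub_le _ _ (measurable_const.mul (Measure.measurable_rnDeriv _ _))
    _ ≤ HE P Q a b := setLIntegral_le_lintegral _ _

lemma HE_one_eq (P Q : Measure Ω) [IsFiniteMeasure P] [IsFiniteMeasure Q]
    {c : ℝ≥0∞} (hc : c ≠ ⊤) :
    HE P Q 1 c = P {ω | c * Q.rnDeriv (P + Q) ω < P.rnDeriv (P + Q) ω}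
      - c * Q {ω | c * Q.rnDeriv (P + Q) ω < P.rnDeriv (P + Q) ω} := by
  set p := P.rnDeriv (P + Q)
  set q := Q.rnDeriv (P + Q)
  have hpm : Measurable p := Measure.measurable_rnDeriv _ _
  have hqm : Measurable q := Measure.measurable_rnDeriv _ _
  set A : Set Ω := {ω | c * q ω < p ω} with hA
  have hAm : MeasurableSet A := measurableSet_lt (measurable_const.mul hqm) hpm
  have hP : ∫⁻ ω in A, p ω ∂(P + Q) = P A :=
    Measure.setLIntegral_rnDeriv' (absCont_left P Q) hAm
  have hQ : ∫⁻ ω in A, q ω ∂(P + Q) = Q A :=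
    Measure.setLIntegral_rnDeriv' (absCont_right P Q) hAm
  have hind : ∀ ω, (1 * p ω - c * q ω) = A.indicator (fun ω => p ω - c * q ω) ω := by
    intro ω
    rw [one_mul]
    by_cases h : ω ∈ A
    · rw [Set.indicator_of_mem h]
    · rw [Set.indicator_of_notMem h, tsub_eq_zero_of_le (not_lt.mp h)]
  rw [HE]
  rw [lintegral_congr hind]
  rw [lintegral_indicator hAm]
  rw [lintegral_sub (measurable_const.fun_mul hqm)]
  · rw [hP, lintegral_const_mul c hqm, hQ]
  · rw [lintegral_const_mul c hqm, hQ]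
    exact ENNReal.mul_ne_top hc (measure_ne_top Q A)
  · exact (ae_restrict_iff' hAm).mpr (Filter.Eventually.of_forall fun ω h => le_of_lt h)

lemma prod_withDensity (μ : Measure Ω) (ν : Measure Ω') [SigmaFinite μ] [SigmaFinite ν]
    {f : Ω → ℝ≥0∞} {g : Ω' → ℝ≥0∞} (hf : Measurable f) (hg : Measurable g)
    [SigmaFinite (μ.withDensity f)] [SigmaFinite (ν.withDensity g)] :
    (μ.withDensity f).prod (ν.withDensity g)
      = (μ.prod ν).withDensity (fun z => f z.1 * g z.2) := by
  refine Measure.prod_eq fun s t hs ht => ?_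
  rw [withDensity_apply _ (hs.prod ht), ← Measure.prod_restrict,
    lintegral_prod_mul hf.aemeasurable hg.aemeasurable,
    withDensity_apply _ hs, withDensity_apply _ ht]

lemma HE_withDensity (ν : Measure Ω) [SigmaFinite ν] {f g : Ω → ℝ≥0∞}
    (hf : Measurable f) (hg : Measurable g)
    (hf' : ∀ᵐ ω ∂ν, f ω ≠ ⊤) (hg' : ∀ᵐ ω ∂ν, g ω ≠ ⊤)
    [IsFiniteMeasure (ν.withDensity f)] [IsFiniteMeasure (ν.withDensity g)]
    (a b : ℝ≥0∞) :
    HE (ν.withDensity f) (ν.withDensity g) a b = ∫⁻ ω, (a * f ω - b * g ω) ∂ν := by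
  set P := ν.withDensity f with hPdef
  set Q := ν.withDensity g with hQdef
  have hσ : P + Q = ν.withDensity (f + g) := (withDensity_add_left hf g).symm
  haveI : IsFiniteMeasure (ν.withDensity (f + g)) := by rw [← hσ]; infer_instance
  have hPσ : P ≪ ν.withDensity (f + g) := hσ ▸ absCont_left P Q
  have hQσ : Q ≪ ν.withDensity (f + g) := hσ ▸ absCont_right P Q
  have h2 : (ν.withDensity (f + g)).rnDeriv ν =ᵐ[ν] (f + g) :=
    Measure.rnDeriv_withDensity ν (f := f + g) (hf.add hg)
  have hrP : ∀ᵐ ω ∂ν, P.rnDeriv (ν.withDensity (f + g)) ω * (f ω + g ω) = f ω := by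
    filter_upwards [Measure.rnDeriv_mul_rnDeriv hPσ, h2,
      Measure.rnDeriv_withDensity ν hf] with ω e1 e2 e3
    have : f ω + g ω = (f + g) ω := rfl
    rw [this, ← e2, ← e3]
    exact e1
  have hrQ : ∀ᵐ ω ∂ν, Q.rnDeriv (ν.withDensity (f + g)) ω * (f ω + g ω) = g ω := by
    filter_upwards [Measure.rnDeriv_mul_rnDeriv hQσ, h2,
      Measure.rnDeriv_withDensity ν hg] with ω e1 e2 e3
    have : f ω + g ω = (f + g) ω := rfl
    rw [this, ← e2, ← e3]
    exact e1
  rw [HE, hσ, lintegral_withDensity_eq_lintegral_mul ν (f := f + g) (hf.add hg)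
    ((measurable_const.fun_mul (Measure.measurable_rnDeriv _ _)).fun_sub
      (measurable_const.fun_mul (Measure.measurable_rnDeriv _ _)))]
  apply lintegral_congr_ae
  filter_upwards [hrP, hrQ, hf', hg'] with ω h1 h2 hft hgt
  simp only [Pi.mul_apply, Pi.add_apply]
  have htop : f ω + g ω ≠ ⊤ := ENNReal.add_ne_top.mpr ⟨hft, hgt⟩
  rw [mul_comm, ENNReal.sub_mul (fun _ _ => htop), mul_assoc, mul_assoc, h1, h2]

lemma ae_comp_fst (μ : Measure Ω) (ν : Measure Ω') [SFinite ν] {p : Ω → Prop}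
    (h : ∀ᵐ x ∂μ, p x) :
    ∀ᵐ z ∂(μ.prod ν), p z.1 := by
  rw [ae_iff] at h ⊢
  have hset : {z : Ω × Ω' | ¬ p z.1} = {x | ¬ p x} ×ˢ Set.univ := by
    ext z; simp [Set.mem_prod]
  rw [hset, Measure.prod_prod, h, zero_mul]

lemma ae_comp_snd (μ : Measure Ω) (ν : Measure Ω') [SFinite ν] {p : Ω' → Prop}
    (h : ∀ᵐ x ∂ν, p x) :
    ∀ᵐ z ∂(μ.prod ν), p z.2 := by
  rw [ae_iff] at h ⊢
  have hset : {z : Ω × Ω' | ¬ p z.2} = Set.univ ×ˢ {x | ¬ p x} := by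
    ext z; simp [Set.mem_prod]
  rw [hset, Measure.prod_prod, h, mul_zero]

end Auxiliary

open ENNReal

/-- Adaptive composition of dominating pairs: if `(P,Q)` dominates `(μ₁,ν₁)` and `(P',Q')`
dominates the pair of Markov kernels `(κ,η)` uniformly in the first coordinate, then
`(P × P', Q × Q')` dominates the composition-products `(μ₁ ⊗ κ, ν₁ ⊗ η)`. -/
theorem adaptive_composition_dominating
    {Ω₁ Ω₂ Ω₁' Ω₂' : Type*}
    [MeasurableSpace Ω₁] [MeasurableSpace Ω₂] [MeasurableSpace Ω₁'] [MeasurableSpace Ω₂']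
    (μ₁ ν₁ : Measure Ω₁) [IsProbabilityMeasure μ₁] [IsProbabilityMeasure ν₁]
    (κ η : Kernel Ω₁ Ω₂) [IsMarkovKernel κ] [IsMarkovKernel η]
    (P Q : Measure Ω₁') [IsProbabilityMeasure P] [IsProbabilityMeasure Q]
    (P' Q' : Measure Ω₂') [IsProbabilityMeasure P'] [IsProbabilityMeasure Q']
    (h₁ : ∀ α : ℝ, 0 ≤ α → hockeyStick α μ₁ ν₁ ≤ hockeyStick α P Q)
    (h₂ : ∀ α : ℝ, 0 ≤ α → ∀ ω₁ : Ω₁, hockeyStick α (κ ω₁) (η ω₁) ≤ hockeyStick α P' Q') :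
    ∀ α : ℝ, 0 ≤ α →
      hockeyStick α (μ₁.compProd κ) (ν₁.compProd η) ≤ hockeyStick α (P.prod P') (Q.prod Q') := by
  intro α hα
  set c := ENNReal.ofReal α with hcdef
  have hc : c ≠ ⊤ := ENNReal.ofReal_ne_top
  -- measures and densities
  set M := μ₁.compProd κ with hMdef
  set N := ν₁.compProd η with hNdef
  set ρ := μ₁ + ν₁ with hρdef
  set p₁ := μ₁.rnDeriv ρ with hp₁def
  set q₁ := ν₁.rnDeriv ρ with hq₁def
  set ρP := P + Q with hρPdef
  set pP := P.rnDeriv ρP with hpPdef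
  set qP := Q.rnDeriv ρP with hqPdef
  set ρ' := P' + Q' with hρ'def
  set p' := P'.rnDeriv ρ' with hp'def
  set q' := Q'.rnDeriv ρ' with hq'def
  have hp₁m : Measurable p₁ := Measure.measurable_rnDeriv _ _
  have hq₁m : Measurable q₁ := Measure.measurable_rnDeriv _ _
  have hpPm : Measurable pP := Measure.measurable_rnDeriv _ _
  have hqPm : Measurable qP := Measure.measurable_rnDeriv _ _
  have hp'm : Measurable p' := Measure.measurable_rnDeriv _ _
  have hq'm : Measurable q' := Measure.measurable_rnDeriv _ _
  -- the optimal set for the composed pair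
  set A : Set (Ω₁ × Ω₂) :=
    {z | c * N.rnDeriv (M + N) z < M.rnDeriv (M + N) z} with hAdef
  have hAm : MeasurableSet A :=
    measurableSet_lt (measurable_const.mul (Measure.measurable_rnDeriv _ _))
      (Measure.measurable_rnDeriv _ _)
  set F : Ω₁ → ℝ≥0∞ := fun ω => (κ ω) (Prod.mk ω ⁻¹' A) with hFdef
  set G : Ω₁ → ℝ≥0∞ := fun ω => (η ω) (Prod.mk ω ⁻¹' A) with hGdef
  have hFm : Measurable F := Kernel.measurable_kernel_prodMk_left hAm
  have hGm : Measurable G := Kernel.measurable_kernel_prodMk_left hAm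
  -- Step 1 : HE of the composition equals a difference of integrals
  have step1 : HE M N 1 c = (∫⁻ ω, p₁ ω * F ω ∂ρ) - ∫⁻ ω, c * (q₁ ω * G ω) ∂ρ := by
    rw [HE_one_eq M N hc, Measure.compProd_apply hAm, Measure.compProd_apply hAm]
    have e1 : ∫⁻ ω, F ω ∂μ₁ = ∫⁻ ω, p₁ ω * F ω ∂ρ := by
      conv_lhs => rw [← Measure.withDensity_rnDeriv_eq μ₁ ρ (absCont_left μ₁ ν₁)]
      rw [lintegral_withDensity_eq_lintegral_mul ρ hp₁m hFm]
      rfl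
    have e2 : ∫⁻ ω, G ω ∂ν₁ = ∫⁻ ω, q₁ ω * G ω ∂ρ := by
      conv_lhs => rw [← Measure.withDensity_rnDeriv_eq ν₁ ρ (absCont_right μ₁ ν₁)]
      rw [lintegral_withDensity_eq_lintegral_mul ρ hq₁m hGm]
      rfl
    rw [e1, e2, lintegral_const_mul c (hq₁m.fun_mul hGm)]
  -- Step 2 : bound by a double integral
  have step2 : HE M N 1 c ≤ ∫⁻ ω, HE P' Q' (p₁ ω) (c * q₁ ω) ∂ρ := by
    rw [step1]
    refine le_trans (lintegral_sub_le' _ _ (measurable_const.mul (hq₁m.mul hGm)).aemeasurable) ?_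
    apply lintegral_mono_ae
    filter_upwards [Measure.rnDeriv_ne_top μ₁ ρ, Measure.rnDeriv_ne_top ν₁ ρ] with ω hp₁t hq₁t
    have hb : c * q₁ ω ≠ ⊤ := ENNReal.mul_ne_top hc hq₁t
    have hset : p₁ ω * F ω - (c * q₁ ω) * G ω ≤ HE (κ ω) (η ω) (p₁ ω) (c * q₁ ω) :=
      HE_set_le (κ ω) (η ω) _ _ (measurable_prodMk_left hAm)
    have hmono : HE (κ ω) (η ω) (p₁ ω) (c * q₁ ω) ≤ HE P' Q' (p₁ ω) (c * q₁ ω) :=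
      HE_mono (fun β hβ => h₂ β hβ ω) hp₁t hb
    calc p₁ ω * F ω - c * (q₁ ω * G ω)
        = p₁ ω * F ω - (c * q₁ ω) * G ω := by rw [mul_assoc]
      _ ≤ HE (κ ω) (η ω) (p₁ ω) (c * q₁ ω) := hset
      _ ≤ HE P' Q' (p₁ ω) (c * q₁ ω) := hmono
  -- the double-integral integrand, jointly measurable
  have hφm : Measurable fun z : Ω₁ × Ω₂' => p₁ z.1 * p' z.2 - (c * q₁ z.1) * q' z.2 :=
    ((hp₁m.comp measurable_fst).mul (hp'm.comp measurable_snd)).sub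
      (((measurable_const.mul hq₁m).comp measurable_fst).mul (hq'm.comp measurable_snd))
  -- Step 3 : swap and compare on the first component
  have step3 : ∫⁻ ω, HE P' Q' (p₁ ω) (c * q₁ ω) ∂ρ
      ≤ ∫⁻ x, HE P Q (p' x) (c * q' x) ∂ρ' := by
    have e1 : ∫⁻ ω, HE P' Q' (p₁ ω) (c * q₁ ω) ∂ρ
        = ∫⁻ ω, ∫⁻ x, (p₁ ω * p' x - (c * q₁ ω) * q' x) ∂ρ' ∂ρ := rfl
    rw [e1, lintegral_lintegral_swap hφm.aemeasurable]
    apply lintegral_mono_ae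
    filter_upwards [Measure.rnDeriv_ne_top P' ρ', Measure.rnDeriv_ne_top Q' ρ'] with x hp't hq't
    have e2 : HE μ₁ ν₁ (p' x) (c * q' x)
        = ∫⁻ ω, (p' x * p₁ ω - (c * q' x) * q₁ ω) ∂ρ := rfl
    have e3 : ∫⁻ ω, (p₁ ω * p' x - (c * q₁ ω) * q' x) ∂ρ
        = ∫⁻ ω, (p' x * p₁ ω - (c * q' x) * q₁ ω) ∂ρ := by
      apply lintegral_congr fun ω => ?_
      congr 1
      · rw [mul_comm]
      · rw [mul_comm (c * q₁ ω) (q' x), ← mul_assoc, mul_comm (q' x) c, mul_assoc]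
    rw [e3, ← e2]
    exact HE_mono h₁ hp't (ENNReal.mul_ne_top hc hq't)
  -- Step 4 : identify the RHS with HE of the product measures
  have step4 : ∫⁻ x, HE P Q (p' x) (c * q' x) ∂ρ'
      = HE (P.prod P') (Q.prod Q') 1 c := by
    have eP : ρP.withDensity pP = P := Measure.withDensity_rnDeriv_eq _ _ (absCont_left P Q)
    have eQ : ρP.withDensity qP = Q := Measure.withDensity_rnDeriv_eq _ _ (absCont_right P Q)
    have eP' : ρ'.withDensity p' = P' := Measure.withDensity_rnDeriv_eq _ _ (absCont_left P' Q')
    have eQ' : ρ'.withDensity q' = Q' := Measure.withDensity_rnDeriv_eq _ _ (absCont_right P' Q')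
    haveI : SigmaFinite (ρP.withDensity pP) := by rw [eP]; infer_instance
    haveI : SigmaFinite (ρP.withDensity qP) := by rw [eQ]; infer_instance
    haveI : SigmaFinite (ρ'.withDensity p') := by rw [eP']; infer_instance
    haveI : SigmaFinite (ρ'.withDensity q') := by rw [eQ']; infer_instance
    have hprodP : P.prod P' = (ρP.prod ρ').withDensity (fun z => pP z.1 * p' z.2) := by
      rw [← eP, ← eP', prod_withDensity ρP ρ' hpPm hp'm]
    have hprodQ : Q.prod Q' = (ρP.prod ρ').withDensity (fun z => qP z.1 * q' z.2) := by
      rw [← eQ, ← eQ', prod_withDensity ρP ρ' hqPm hq'm]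
    haveI : IsFiniteMeasure ((ρP.prod ρ').withDensity (fun z => pP z.1 * p' z.2)) := by
      rw [← hprodP]; infer_instance
    haveI : IsFiniteMeasure ((ρP.prod ρ').withDensity (fun z => qP z.1 * q' z.2)) := by
      rw [← hprodQ]; infer_instance
    have hfin1 : ∀ᵐ z ∂(ρP.prod ρ'), pP z.1 * p' z.2 ≠ ⊤ := by
      filter_upwards [ae_comp_fst ρP ρ' (Measure.rnDeriv_ne_top P ρP),
        ae_comp_snd ρP ρ' (Measure.rnDeriv_ne_top P' ρ')] with z h1 h2
      exact ENNReal.mul_ne_top h1 h2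
    have hfin2 : ∀ᵐ z ∂(ρP.prod ρ'), qP z.1 * q' z.2 ≠ ⊤ := by
      filter_upwards [ae_comp_fst ρP ρ' (Measure.rnDeriv_ne_top Q ρP),
        ae_comp_snd ρP ρ' (Measure.rnDeriv_ne_top Q' ρ')] with z h1 h2
      exact ENNReal.mul_ne_top h1 h2
    have hfm1 : Measurable fun z : Ω₁' × Ω₂' => pP z.1 * p' z.2 :=
      (hpPm.comp measurable_fst).mul (hp'm.comp measurable_snd)
    have hfm2 : Measurable fun z : Ω₁' × Ω₂' => qP z.1 * q' z.2 :=
      (hqPm.comp measurable_fst).mul (hq'm.comp measurable_snd)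
    rw [hprodP, hprodQ, HE_withDensity (ρP.prod ρ') hfm1 hfm2 hfin1 hfin2 1 c]
    have hψm : Measurable fun z : Ω₁' × Ω₂' =>
        1 * (pP z.1 * p' z.2) - c * (qP z.1 * q' z.2) :=
      (measurable_const.mul ((hpPm.comp measurable_fst).mul (hp'm.comp measurable_snd))).sub
        (measurable_const.mul ((hqPm.comp measurable_fst).mul (hq'm.comp measurable_snd)))
    rw [lintegral_prod _ hψm.aemeasurable]
    rw [← lintegral_lintegral_swap]
    · apply lintegral_congr fun x => ?_
      apply lintegral_congr fun y => ?_
      congr 1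
      · rw [one_mul, mul_comm]
      · rw [mul_comm (qP y) (q' x), ← mul_assoc]
    · have hm : Measurable fun z : Ω₂' × Ω₁' =>
          1 * (pP z.2 * p' z.1) - c * (qP z.2 * q' z.1) :=
        (measurable_const.mul ((hpPm.comp measurable_snd).mul
          (hp'm.comp measurable_fst))).sub
          (measurable_const.mul ((hqPm.comp measurable_snd).mul
            (hq'm.comp measurable_fst)))
      exact hm.aemeasurable
  -- conclusion
  rw [hockeyStick_eq_toReal hα, hockeyStick_eq_toReal hα]
  exact ENNReal.toReal_mono (HE_ne_top' _ _ one_ne_top)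
    ((step2.trans step3).trans_eq step4)
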